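/- For every transition system T, every theorem of the normal modal logic S4.2 = K+(T)+(4)+(.2) is valid on the general Kripke frame G_{F_T} = (F_T, ⇝, Admiss(CTL)); that is, S4.2 ⊆ MLAR^fin_T. -/
import Mathlib


namespace MLAR

/-- Modal formulas over a countably infinite set of propositional variables (indexed by ℕ). -/
inductive MF : Type where
  | top : MF
  | var : ℕ → MF
  | and : MF → MF → MF
  | neg : MF → MF
  | dia : MF → MF

namespace MF

/-- □φ := ¬◇¬φ -/
def box (φ : MF) : MF := neg (dia (neg φ))

/-- Material implication, definable classically from ∧ and ¬. -/
def imp (φ ψ : MF) : MF := neg (and φ (neg ψ))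

/-- Uniform substitution. -/
def subst (σ : ℕ → MF) : MF → MF
  | top => top
  | var p => σ p
  | and φ ψ => and (subst σ φ) (subst σ ψ)
  | neg φ => neg (subst σ φ)
  | dia φ => dia (subst σ φ)

/-- Satisfaction of a modal formula at a world of a Kripke model. -/
def Sat {W : Type*} (R : W → W → Prop) (V : ℕ → Set W) : MF → W → Prop
  | top, _ => True
  | var p, w => w ∈ V p
  | and φ ψ, w => Sat R V φ w ∧ Sat R V ψ w
  | neg φ, w => ¬ Sat R V φ w
  | dia φ, w => ∃ v, R w v ∧ Sat R V φ v

end MF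

/-- A boolean evaluation: respects ⊤, ∧, ¬, treating variables and ◇-formulas as atoms. -/
def IsPropEval (v : MF → Prop) : Prop :=
  v MF.top ∧ (∀ φ ψ, v (MF.and φ ψ) ↔ (v φ ∧ v ψ)) ∧ (∀ φ, v (MF.neg φ) ↔ ¬ v φ)

/-- Propositional tautologies. -/
def IsTautology (φ : MF) : Prop := ∀ v, IsPropEval v → v φ

/-- The K-axiom □(p→q)→(□p→□q). -/
def axK : MF := (((MF.var 0).imp (MF.var 1)).box).imp (((MF.var 0).box).imp ((MF.var 1).box))

/-- Normal modal logics. -/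
def IsNormal (L : Set MF) : Prop :=
  (∀ φ, IsTautology φ → φ ∈ L) ∧
  axK ∈ L ∧
  (∀ φ ψ, φ ∈ L → φ.imp ψ ∈ L → ψ ∈ L) ∧
  (∀ φ σ, φ ∈ L → φ.subst σ ∈ L) ∧
  (∀ φ, φ ∈ L → φ.box ∈ L)

/-- The smallest normal modal logic containing Γ. -/
def KPlus (Γ : Set MF) : Set MF := ⋂₀ {L | IsNormal L ∧ Γ ⊆ L}

/-- (T) = p → ◇p -/
def axT : MF := (MF.var 0).imp ((MF.var 0).dia)
/-- (4) = ◇◇p → ◇p -/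
def ax4 : MF := ((MF.var 0).dia.dia).imp ((MF.var 0).dia)
/-- (.2) = ◇□p → □◇p -/
def axDot2 : MF := ((MF.var 0).box.dia).imp ((MF.var 0).dia.box)
/-- (.1) = □◇p → ◇□p -/
def axDot1 : MF := ((MF.var 0).dia.box).imp ((MF.var 0).box.dia)
/-- Grzegorczyk axiom □(□(p→□p)→p)→p -/
def axGrz : MF := ((((MF.var 0).imp ((MF.var 0).box)).box.imp (MF.var 0)).box).imp (MF.var 0)

def S4 : Set MF := KPlus {axT, ax4}
def S4Dot2 : Set MF := KPlus {axT, ax4, axDot2}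
def S4Dot1 : Set MF := KPlus {axT, ax4, axDot1}
def S4Dot2Dot1 : Set MF := KPlus {axT, ax4, axDot2, axDot1}
def Grz : Set MF := KPlus {axGrz}

/-- Transition systems over a set AP of atomic propositions. -/
structure TS (AP : Type) : Type 1 where
  State : Type
  rel : State → State → Prop
  init : Set State
  label : State → Set AP
  nonempty : Nonempty State
  serial : ∀ s, ∃ t, rel s t

/-- `f` witnesses that T₁ is an abstraction of T₂. -/
def IsAbstractionMap {AP : Type} (T₁ T₂ : TS AP) (f : T₂.State → T₁.State) : Prop :=
  Function.Surjective f ∧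
  (∀ s, T₁.label (f s) = T₂.label s) ∧
  (∀ a b, T₁.rel a b ↔ ∃ s t, T₂.rel s t ∧ f s = a ∧ f t = b) ∧
  T₁.init = f '' T₂.init

/-- `Abs T₁ T₂` : T₁ is an abstraction of T₂ (written T₁ ⇝ T₂; T₂ is a refinement of T₁). -/
def Abs {AP : Type} (T₁ T₂ : TS AP) : Prop := ∃ f, IsAbstractionMap T₁ T₂ f

mutual
/-- CTL state formulas. -/
inductive CTLs (AP : Type) : Type where
  | top : CTLs AP
  | atom : AP → CTLs AP
  | and : CTLs AP → CTLs AP → CTLs AP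
  | neg : CTLs AP → CTLs AP
  | ex : CTLp AP → CTLs AP
  | al : CTLp AP → CTLs AP
/-- CTL path formulas. -/
inductive CTLp (AP : Type) : Type where
  | next : CTLs AP → CTLp AP
  | untl : CTLs AP → CTLs AP → CTLp AP
end

/-- Infinite paths of a transition system. -/
def TS.IsPath {AP : Type} (T : TS AP) (π : ℕ → T.State) : Prop := ∀ i, T.rel (π i) (π (i + 1))

mutual
/-- Satisfaction of CTL state formulas at states. -/
def CTLs.Sat {AP : Type} (T : TS AP) : CTLs AP → T.State → Prop
  | .top, _ => True
  | .atom a, s => a ∈ T.label s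
  | .and φ ψ, s => CTLs.Sat T φ s ∧ CTLs.Sat T ψ s
  | .neg φ, s => ¬ CTLs.Sat T φ s
  | .ex φ, s => ∃ π, T.IsPath π ∧ π 0 = s ∧ CTLp.Sat T φ π
  | .al φ, s => ∀ π, T.IsPath π → π 0 = s → CTLp.Sat T φ π
/-- Satisfaction of CTL path formulas on paths. -/
def CTLp.Sat {AP : Type} (T : TS AP) : CTLp AP → (ℕ → T.State) → Prop
  | .next φ, π => CTLs.Sat T φ (π 1)
  | .untl φ ψ, π => ∃ j, CTLs.Sat T ψ (π j) ∧ ∀ i, i < j → CTLs.Sat T φ (π i)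
end

/-- A transition system satisfies a CTL state formula iff all its initial states do. -/
def TS.sat {AP : Type} (T : TS AP) (Φ : CTLs AP) : Prop := ∀ s ∈ T.init, CTLs.Sat T Φ s

/-- Admissible valuations on the class C: each variable denotes a CTL-expressible set. -/
def AdmissibleVal {AP : Type} (C : Set (TS AP)) (V : ℕ → Set {S : TS AP // S ∈ C}) : Prop :=
  ∀ p, ∃ Φ : CTLs AP, ∀ S : {S : TS AP // S ∈ C}, S ∈ V p ↔ (S : TS AP).sat Φ

/-- The refinement accessibility relation ⇝ on the class C. -/
def refRel {AP : Type} (C : Set (TS AP)) :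
    {S : TS AP // S ∈ C} → {S : TS AP // S ∈ C} → Prop :=
  fun S₁ S₂ => Abs S₁.1 S₂.1

/-- Validity of a modal formula at a world of the general frame (C, ⇝, Admiss(CTL)). -/
def ValidAt {AP : Type} (C : Set (TS AP)) (φ : MF) (S : {S : TS AP // S ∈ C}) : Prop :=
  ∀ V, AdmissibleVal C V → MF.Sat (refRel C) V φ S

/-- Validity on the general frame (C, ⇝, Admiss(CTL)). -/
def ValidOn {AP : Type} (C : Set (TS AP)) (φ : MF) : Prop := ∀ S, ValidAt C φ S

/-- The class of all finite abstractions of T. -/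
def FinAbs {AP : Type} (T : TS AP) : Set (TS AP) := {S | Finite S.State ∧ Abs S T}

/-- The class of all abstractions of T. -/
def AllAbs {AP : Type} (T : TS AP) : Set (TS AP) := {S | Abs S T}

/-- MLAR^fin_T. -/
def MLARfin {AP : Type} (T : TS AP) : Set MF := {φ | ValidOn (FinAbs T) φ}
/-- MLAR^all_T. -/
def MLARall {AP : Type} (T : TS AP) : Set MF := {φ | ValidOn (AllAbs T) φ}
set_option linter.dupNamespace false in
/-- MLAR on the class of all transition systems over the fixed countably infinite AP = ℕ. -/
def MLAR : Set MF := {φ | ValidOn (Set.univ : Set (TS ℕ)) φ}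

/-- Finite partial functions {0,…,n−1} ⇀ {0,1}. -/
def FPF (n : ℕ) : Type := Fin n → Option Bool

/-- g ≼ h iff h extends g. -/
def FPFle {n : ℕ} (g h : FPF n) : Prop := ∀ i x, g i = some x → h i = some x

/-- The modal logic of all finite partial function posets. -/
def S4FPF : Set MF := {φ | ∀ n : ℕ, ∀ V : ℕ → Set (FPF n), ∀ w, MF.Sat FPFle V φ w}

/-- Admissible-set algebra of a general Kripke frame:
closed under complements and finite (including empty and binary) unions. -/
def IsGeneralFrameAdmiss {W : Type*} (𝒜 : Set (Set W)) : Prop :=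
  (∅ : Set W) ∈ 𝒜 ∧ (∀ A ∈ 𝒜, Aᶜ ∈ 𝒜) ∧ (∀ A ∈ 𝒜, ∀ B ∈ 𝒜, A ∪ B ∈ 𝒜)

/-- Formulas valid at a world of a general Kripke frame (W, R, 𝒜). -/
def GValidAt {W : Type*} (R : W → W → Prop) (𝒜 : Set (Set W)) (φ : MF) (c : W) : Prop :=
  ∀ V : ℕ → Set W, (∀ p, V p ∈ 𝒜) → MF.Sat R V φ c

/-- A is a pure button at c: □(b→□b) and □◇b hold at c under V(b) = A. -/
def PureButton {W : Type*} (R : W → W → Prop) (c : W) (A : Set W) : Prop :=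
  (∀ d, R c d → d ∈ A → ∀ e, R d e → e ∈ A) ∧ (∀ d, R c d → ∃ e, R d e ∧ e ∈ A)

/-- A is a pure weak button at c: □(b→□b) and ◇b hold at c under V(b) = A. -/
def PureWeakButton {W : Type*} (R : W → W → Prop) (c : W) (A : Set W) : Prop :=
  (∀ d, R c d → d ∈ A → ∀ e, R d e → e ∈ A) ∧ (∃ e, R c e ∧ e ∈ A)

/-- B is a switch at c: □(◇s ∧ ◇¬s) holds at c under V(s) = B. -/
def IsSwitch {W : Type*} (R : W → W → Prop) (c : W) (B : Set W) : Prop :=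
  ∀ d, R c d → (∃ e, R d e ∧ e ∈ B) ∧ (∃ e, R d e ∧ e ∉ B)

/-- C is a B-restricted switch at c:
□(¬B → (◇(s ∧ ¬B) ∧ ◇(¬s ∧ ¬B))) holds at c under V(s) = C. -/
def RestrictedSwitch {W : Type*} (R : W → W → Prop) (c : W) (B C : Set W) : Prop :=
  ∀ d, R c d → d ∉ B →
    (∃ e, R d e ∧ e ∈ C ∧ e ∉ B) ∧ (∃ e, R d e ∧ e ∉ C ∧ e ∉ B)

/-- Independence of unpushed pure buttons A and switches B at c. -/
def Independent {W : Type*} (R : W → W → Prop) (c : W) {n m : ℕ}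
    (A : Fin n → Set W) (B : Fin m → Set W) : Prop :=
  ∀ (I₀ I₁ : Set (Fin n)) (J₀ J₁ : Set (Fin m)), I₀ ⊆ I₁ →
    ∀ d, R c d →
      ((∀ i, i ∈ I₀ ↔ d ∈ A i) ∧ (∀ j, j ∈ J₀ ↔ d ∈ B j)) →
      ∃ e, R d e ∧ (∀ i, i ∈ I₁ ↔ e ∈ A i) ∧ (∀ j, j ∈ J₁ ↔ e ∈ B j)

/-- Independence until B of pure buttons A and B-restricted switches C at c. -/
def IndependentUntil {W : Type*} (R : W → W → Prop) (c : W) (Bb : Set W) {n m : ℕ}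
    (A : Fin n → Set W) (C : Fin m → Set W) : Prop :=
  ∀ (I₀ I₁ : Set (Fin n)) (J₀ J₁ : Set (Fin m)), I₀ ⊆ I₁ →
    ∀ d, R c d →
      ((∀ i, i ∈ I₀ ↔ d ∈ A i) ∧ (∀ j, j ∈ J₀ ↔ d ∈ C j) ∧ d ∉ Bb) →
      ∃ e, R d e ∧ (∀ i, i ∈ I₁ ↔ e ∈ A i) ∧ (∀ j, j ∈ J₁ ↔ e ∈ C j) ∧ e ∉ Bb

/-- (L, Rr) is a decision at c: a pair of mutually exclusive unpushed pure weak buttons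
whose union is an unpushed pure button, with □(¬l ∨ ¬r) and □((◇l ∧ ◇r) ∨ l ∨ r) at c. -/
def Decision {W : Type*} (R : W → W → Prop) (c : W) (L Rr : Set W) : Prop :=
  PureWeakButton R c L ∧ c ∉ L ∧
  PureWeakButton R c Rr ∧ c ∉ Rr ∧
  PureButton R c (L ∪ Rr) ∧ c ∉ L ∪ Rr ∧
  (∀ d, R c d → ¬(d ∈ L ∧ d ∈ Rr)) ∧
  (∀ d, R c d → (((∃ e, R d e ∧ e ∈ L) ∧ (∃ e, R d e ∧ e ∈ Rr)) ∨ d ∈ L ∨ d ∈ Rr))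

/-- Independence of decisions at c. -/
def IndependentDecisions {W : Type*} (R : W → W → Prop) (c : W) {n : ℕ}
    (L Rr : Fin n → Set W) : Prop :=
  ∀ (I₀ I₁ J₀ J₁ : Set (Fin n)), I₀ ⊆ I₁ → J₀ ⊆ J₁ → (∀ i ∈ J₁, i ∉ I₁) →
    ∀ d, R c d →
      ((∀ i, i ∈ I₀ ↔ d ∈ L i) ∧ (∀ i, i ∈ J₀ ↔ d ∈ Rr i)) →
      ∃ e, R d e ∧ (∀ i, i ∈ I₁ ↔ e ∈ L i) ∧ (∀ i, i ∈ J₁ ↔ e ∈ Rr i)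

/-! ### Auxiliary development for stmt_0 -/

section Aux

/-- Confluence (directedness) of a relation. -/
def Confl {W : Type*} (R : W → W → Prop) : Prop :=
  ∀ a b c, R a b → R a c → ∃ d, R b d ∧ R c d

lemma sat_imp {W : Type*} (R : W → W → Prop) (V : ℕ → Set W) (φ ψ : MF) (w : W) :
    MF.Sat R V (φ.imp ψ) w ↔ (MF.Sat R V φ w → MF.Sat R V ψ w) := by
  simp only [MF.imp, MF.Sat]
  tauto

lemma sat_box {W : Type*} (R : W → W → Prop) (V : ℕ → Set W) (φ : MF) (w : W) :
    MF.Sat R V φ.box w ↔ ∀ v, R w v → MF.Sat R V φ v := by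
  simp only [MF.box, MF.Sat]
  push_neg
  rfl

lemma sat_subst {W : Type*} (R : W → W → Prop) (V : ℕ → Set W) (σ : ℕ → MF) (φ : MF)
    (w : W) :
    MF.Sat R V (φ.subst σ) w ↔
      MF.Sat R (fun p => {v | MF.Sat R V (σ p) v}) φ w := by
  induction φ generalizing w with
  | top => simp [MF.subst, MF.Sat]
  | var p => simp only [MF.subst, MF.Sat]; rfl
  | and φ ψ ihφ ihψ => simp only [MF.subst, MF.Sat, ihφ, ihψ]
  | neg φ ihφ => simp only [MF.subst, MF.Sat, ihφ]
  | dia φ ihφ => simp only [MF.subst, MF.Sat, ihφ]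

/-- Formulas valid on every reflexive, transitive, confluent Kripke frame (with
worlds in `Type 1`) under all valuations. -/
def L0 : Set MF :=
  {φ | ∀ (W : Type 1) (R : W → W → Prop), Reflexive R → Transitive R → Confl R →
    ∀ (V : ℕ → Set W) (w : W), MF.Sat R V φ w}

lemma L0_normal : IsNormal L0 := by
  refine ⟨?_, ?_, ?_, ?_, ?_⟩
  · -- tautologies
    intro φ hφ W R _ _ _ V w
    exact hφ (fun ψ => MF.Sat R V ψ w) ⟨trivial, fun _ _ => Iff.rfl, fun _ => Iff.rfl⟩
  · -- axK
    intro W R _ _ _ V w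
    rw [axK, sat_imp, sat_imp, sat_box, sat_box, sat_box]
    intro h1 h2 v hv
    have := h1 v hv
    rw [sat_imp] at this
    exact this (h2 v hv)
  · -- modus ponens
    intro φ ψ hφ himp W R hr ht hc V w
    have h := himp W R hr ht hc V w
    rw [sat_imp] at h
    exact h (hφ W R hr ht hc V w)
  · -- substitution
    intro φ σ hφ W R hr ht hc V w
    rw [sat_subst]
    exact hφ W R hr ht hc _ w
  · -- necessitation
    intro φ hφ W R hr ht hc V w
    rw [sat_box]
    intro v _
    exact hφ W R hr ht hc V v

lemma axT_mem_L0 : axT ∈ L0 := by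
  intro W R hr _ _ V w
  rw [axT, sat_imp]
  intro h
  exact ⟨w, hr w, h⟩

lemma ax4_mem_L0 : ax4 ∈ L0 := by
  intro W R _ ht _ V w
  rw [ax4, sat_imp]
  rintro ⟨v, hv, u, hu, h⟩
  exact ⟨u, ht hv hu, h⟩

lemma axDot2_mem_L0 : axDot2 ∈ L0 := by
  intro W R _ _ hc V w
  rw [axDot2, sat_imp]
  rintro ⟨v, hv, hbox⟩
  rw [sat_box] at hbox ⊢
  intro u hu
  obtain ⟨d, hvd, hud⟩ := hc w v u hv hu
  exact ⟨d, hud, hbox d hvd⟩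

lemma S4Dot2_subset_L0 : S4Dot2 ⊆ L0 := by
  intro φ hφ
  refine hφ L0 ⟨L0_normal, ?_⟩
  intro ψ hψ
  rcases hψ with h | h | h
  · exact h ▸ axT_mem_L0
  · exact h ▸ ax4_mem_L0
  · exact (Set.mem_singleton_iff.mp h) ▸ axDot2_mem_L0

lemma abs_refl {AP : Type} (S : TS AP) : Abs S S := by
  refine ⟨id, Function.surjective_id, fun _ => rfl, ?_, (Set.image_id _).symm⟩
  intro a b
  constructor
  · intro h
    exact ⟨a, b, h, rfl, rfl⟩
  · rintro ⟨s, t, h, rfl, rfl⟩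
    exact h

lemma abs_trans {AP : Type} {S₁ S₂ S₃ : TS AP} (h12 : Abs S₁ S₂) (h23 : Abs S₂ S₃) :
    Abs S₁ S₃ := by
  obtain ⟨f, hfs, hfl, hfr, hfi⟩ := h12
  obtain ⟨g, hgs, hgl, hgr, hgi⟩ := h23
  refine ⟨f ∘ g, hfs.comp hgs, fun s => (hfl (g s)).trans (hgl s), ?_, ?_⟩
  · intro a b
    rw [hfr a b]
    constructor
    · rintro ⟨s, t, hst, rfl, rfl⟩
      rw [hgr s t] at hst
      obtain ⟨u, v, huv, rfl, rfl⟩ := hst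
      exact ⟨u, v, huv, rfl, rfl⟩
    · rintro ⟨u, v, huv, rfl, rfl⟩
      exact ⟨g u, g v, (hgr _ _).mpr ⟨u, v, huv, rfl, rfl⟩, rfl, rfl⟩
  · rw [hfi, hgi, Set.image_image]
    rfl

/-- Common refinement of two finite abstractions of T, staying finite. -/
lemma abs_confluent {AP : Type} (T S₁ S₂ : TS AP) (h1f : Finite S₁.State)
    (h2f : Finite S₂.State) (h1 : Abs S₁ T) (h2 : Abs S₂ T) :
    ∃ Z : TS AP, Finite Z.State ∧ Abs Z T ∧ Abs S₁ Z ∧ Abs S₂ Z := by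
  obtain ⟨f₁, hf₁s, hf₁l, hf₁r, hf₁i⟩ := h1
  obtain ⟨f₂, hf₂s, hf₂l, hf₂r, hf₂i⟩ := h2
  let St : Type := {ab : S₁.State × S₂.State // ∃ s, f₁ s = ab.1 ∧ f₂ s = ab.2}
  let g : T.State → St := fun s => ⟨(f₁ s, f₂ s), s, rfl, rfl⟩
  have hg : ∀ (z : St) (s : T.State), f₁ s = z.1.1 → f₂ s = z.1.2 → g s = z := by
    intro z s h1' h2'
    exact Subtype.ext (Prod.ext h1' h2')
  have hgsurj : Function.Surjective g := by
    intro z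
    obtain ⟨s, hs1, hs2⟩ := z.2
    exact ⟨s, hg z s hs1 hs2⟩
  let Z : TS AP :=
    { State := St
      rel := fun z w => ∃ s t, T.rel s t ∧ g s = z ∧ g t = w
      init := g '' T.init
      label := fun z => S₁.label z.1.1
      nonempty := ⟨g (Classical.choice T.nonempty)⟩
      serial := by
        intro z
        obtain ⟨s, hs⟩ := hgsurj z
        obtain ⟨t, ht⟩ := T.serial s
        exact ⟨g t, s, t, ht, hs, rfl⟩ }
  have hlab : ∀ (z : St), S₂.label z.1.2 = S₁.label z.1.1 := by
    intro z
    obtain ⟨s, hs1, hs2⟩ := z.2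
    rw [← hs1, ← hs2, hf₁l s, hf₂l s]
  refine ⟨Z, ?_, ?_, ?_, ?_⟩
  · -- finiteness
    haveI := h1f; haveI := h2f
    exact Subtype.finite
  · -- Abs Z T
    exact ⟨g, hgsurj, fun s => hf₁l s, fun a b => Iff.rfl, rfl⟩
  · -- Abs S₁ Z
    refine ⟨fun z => z.1.1, ?_, fun z => rfl, ?_, ?_⟩
    · intro a
      obtain ⟨s, hs⟩ := hf₁s a
      exact ⟨g s, hs⟩
    · intro a b
      rw [hf₁r a b]
      constructor
      · rintro ⟨s, t, hst, rfl, rfl⟩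
        exact ⟨g s, g t, ⟨s, t, hst, rfl, rfl⟩, rfl, rfl⟩
      · rintro ⟨z, w, ⟨s, t, hst, rfl, rfl⟩, rfl, rfl⟩
        exact ⟨s, t, hst, rfl, rfl⟩
    · show S₁.init = (fun z : St => z.1.1) '' (g '' T.init)
      rw [hf₁i, Set.image_image]
  · -- Abs S₂ Z
    refine ⟨fun z => z.1.2, ?_, fun z => hlab z, ?_, ?_⟩
    · intro a
      obtain ⟨s, hs⟩ := hf₂s a
      exact ⟨g s, hs⟩
    · intro a b
      rw [hf₂r a b]
      constructor
      · rintro ⟨s, t, hst, rfl, rfl⟩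
        exact ⟨g s, g t, ⟨s, t, hst, rfl, rfl⟩, rfl, rfl⟩
      · rintro ⟨z, w, ⟨s, t, hst, rfl, rfl⟩, rfl, rfl⟩
        exact ⟨s, t, hst, rfl, rfl⟩
    · show S₂.init = (fun z : St => z.1.2) '' (g '' T.init)
      rw [hf₂i, Set.image_image]

end Aux

/-- For every transition system T, S4.2 ⊆ MLAR^fin_T. -/
theorem stmt_0 (AP : Type) (T : TS AP) : S4Dot2 ⊆ MLARfin T := by
  intro φ hφ
  have hL0 := S4Dot2_subset_L0 hφ
  intro S V _
  refine hL0 {S : TS AP // S ∈ FinAbs T} (refRel (FinAbs T)) ?_ ?_ ?_ V S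
  · intro A
    exact abs_refl A.1
  · intro A B C hAB hBC
    exact abs_trans hAB hBC
  · intro A B C hAB hAC
    obtain ⟨ZB, hZB⟩ := B.2.2
    obtain ⟨ZC, hZC⟩ := C.2.2
    obtain ⟨Z, hZfin, hZT, hBZ, hCZ⟩ :=
      abs_confluent T B.1 C.1 B.2.1 C.2.1 B.2.2 C.2.2
    exact ⟨⟨Z, hZfin, hZT⟩, hBZ, hCZ⟩

end MLAR
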